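/- Fix n ≥ 1 variables and m ≥ 1 clauses of a 3-SAT instance given by c : Fin m → Fin 3 → Fin n × Bool, and consider the associated POMDP. If no assignment v : Fin n → Bool satisfies every clause, then for every deterministic memoryless policy σ : Z → A (inducing P_σ(s,s') := δ(s, σ(o s))(s')), the reachability probability satisfies ReachProb(P_σ, ⊤, s₀) ≤ 1 − 1/m. -/

import Mathlib

open scoped BigOperators

/-- Iterates whose supremum is the reachability probability. -/
noncomputable def reachAux {S : Type*} [Fintype S] [DecidableEq S]
    (P : S → S → ℝ) (t : S) : ℕ → S → ℝ
  | 0, x => if x = t then 1 else 0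
  | n + 1, x => if x = t then 1 else ∑ y, P x y * reachAux P t n y

/-- Reachability probability of target `t` starting from `s` in the Markov chain `P`. -/
noncomputable def ReachProb {S : Type*} [Fintype S] [DecidableEq S]
    (P : S → S → ℝ) (t s : S) : ℝ :=
  ⨆ n : ℕ, reachAux P t n s

/-- The three special states/observations of the 3-SAT POMDP. -/
inductive Sp | start | target | sink
  deriving DecidableEq

instance : Fintype Sp :=
  ⟨{Sp.start, Sp.target, Sp.sink}, fun x => by cases x <;> simp⟩

/-- Transition function of the POMDP associated with a 3-SAT instance
`c : Fin m → Fin 3 → Fin n × Bool`. -/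
noncomputable def satTrans (n m : ℕ) (c : Fin m → Fin 3 → Fin n × Bool) :
    (Fin m × Fin 3) ⊕ Sp → Bool → ((Fin m × Fin 3) ⊕ Sp) → ℝ :=
  fun s a s' =>
    match s with
    | Sum.inr Sp.start =>
        match s' with
        | Sum.inl (_, k) => if k = (0 : Fin 3) then (1 : ℝ) / m else 0
        | Sum.inr _ => 0
    | Sum.inr Sp.target => if s' = Sum.inr Sp.target then 1 else 0
    | Sum.inr Sp.sink => if s' = Sum.inr Sp.sink then 1 else 0
    | Sum.inl (j, k) =>
        if a = (c j k).2 then (if s' = Sum.inr Sp.target then 1 else 0)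
        else if (k : ℕ) < 2 then (if s' = Sum.inl (j, k + 1) then 1 else 0)
        else if s' = Sum.inr Sp.sink then 1 else 0

/-- Observation function of the POMDP associated with a 3-SAT instance. -/
def satObs (n m : ℕ) (c : Fin m → Fin 3 → Fin n × Bool) :
    (Fin m × Fin 3) ⊕ Sp → Fin n ⊕ Sp
  | Sum.inl (j, k) => Sum.inl (c j k).1
  | Sum.inr x => Sum.inr x

/-- If the 3-SAT instance is unsatisfiable, then every deterministic
memoryless policy on the associated POMDP reaches the target with
probability at most `1 - 1/m`. -/
theorem satPOMDP_unsat_bound (n m : ℕ) (hn : 1 ≤ n) (hm : 1 ≤ m)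
    (c : Fin m → Fin 3 → Fin n × Bool)
    (hunsat : ¬ ∃ v : Fin n → Bool, ∀ j : Fin m, ∃ k : Fin 3,
        v (c j k).1 = (c j k).2)
    (σ : (Fin n ⊕ Sp) → Bool) :
    ReachProb (fun s s' => satTrans n m c s (σ (satObs n m c s)) s')
        (Sum.inr Sp.target) (Sum.inr Sp.start) ≤ 1 - 1 / m := by
  classical
  set P : ((Fin m × Fin 3) ⊕ Sp) → ((Fin m × Fin 3) ⊕ Sp) → ℝ :=
    fun s s' => satTrans n m c s (σ (satObs n m c s)) s' with hP
  set t : (Fin m × Fin 3) ⊕ Sp := Sum.inr Sp.target with ht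
  have hm0 : (0:ℝ) < m := by exact_mod_cast hm
  -- the unsatisfied clause
  obtain ⟨j₀, hj₀⟩ : ∃ j : Fin m, ∀ k : Fin 3, σ (Sum.inl (c j k).1) ≠ (c j k).2 := by
    by_contra h
    push_neg at h
    exact hunsat ⟨fun i => σ (Sum.inl i), fun j => h j⟩
  -- indicator sum
  have hind : ∀ (z : (Fin m × Fin 3) ⊕ Sp) (f : ((Fin m × Fin 3) ⊕ Sp) → ℝ),
      (∑ y, (if y = z then (1:ℝ) else 0) * f y) = f z := by
    intro z f
    simp [ite_mul]
  -- rows from literal states are indicators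
  have hrow : ∀ (j : Fin m) (k : Fin 3), ∃ z, ∀ s',
      P (Sum.inl (j, k)) s' = if s' = z then 1 else 0 := by
    intro j k
    by_cases ha : σ (satObs n m c (Sum.inl (j, k))) = (c j k).2
    · exact ⟨Sum.inr Sp.target, fun s' => by simp [hP, satTrans, ha]⟩
    · by_cases hk : (k:ℕ) < 2
      · exact ⟨Sum.inl (j, k + 1), fun s' => by simp [hP, satTrans, ha, hk]; intro h; omega⟩
      · exact ⟨Sum.inr Sp.sink, fun s' => by simp [hP, satTrans, ha, hk]; intro h; omega⟩
  -- row of bad clause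
  have hrowj0 : ∀ (k : Fin 3) (s' : (Fin m × Fin 3) ⊕ Sp),
      P (Sum.inl (j₀, k)) s' =
        if s' = (if (k:ℕ) < 2 then Sum.inl (j₀, k + 1) else Sum.inr Sp.sink) then 1 else 0 := by
    intro k s'
    have hne : σ (satObs n m c (Sum.inl (j₀, k))) ≠ (c j₀ k).2 := by
      simpa [satObs] using hj₀ k
    by_cases hk : (k:ℕ) < 2 <;> simp [hP, satTrans, hne, hk] <;> intro h <;> omega
  -- row from start
  have hstart : ∀ f : ((Fin m × Fin 3) ⊕ Sp) → ℝ,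
      (∑ y, P (Sum.inr Sp.start) y * f y) = ∑ j : Fin m, (1/m) * f (Sum.inl (j, 0)) := by
    intro f
    rw [Fintype.sum_sum_type]
    have h2 : (∑ b : Sp, P (Sum.inr Sp.start) (Sum.inr b) * f (Sum.inr b)) = 0 := by
      simp [hP, satTrans]
    rw [h2, add_zero, Fintype.sum_prod_type]
    refine Finset.sum_congr rfl fun j _ => ?_
    simp [hP, satTrans, ite_mul]
  -- P nonneg
  have hPnn : ∀ s s', 0 ≤ P s s' := by
    intro s s'
    rcases s with ⟨j, k⟩ | sp
    · obtain ⟨z, hz⟩ := hrow j k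
      rw [hz]; split <;> norm_num
    · cases sp
      · rcases s' with p | sp' <;> simp [hP, satTrans] <;> split <;> positivity
      · simp only [hP, satTrans]; split <;> norm_num
      · simp only [hP, satTrans]; split <;> norm_num
  -- bounds on iterates
  have hbd : ∀ (N : ℕ) (x : (Fin m × Fin 3) ⊕ Sp),
      0 ≤ reachAux P t N x ∧ reachAux P t N x ≤ 1 := by
    intro N
    induction N with
    | zero => intro x; constructor <;> · simp only [reachAux]; split <;> norm_num
    | succ N ih =>
      intro x
      by_cases hx : x = t
      · simp [reachAux, hx]
      rcases x with ⟨j, k⟩ | sp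
      · obtain ⟨z, hz⟩ := hrow j k
        have : reachAux P t (N+1) (Sum.inl (j, k)) = reachAux P t N z := by
          simp only [reachAux, if_neg hx]
          rw [show (∑ y, P (Sum.inl (j,k)) y * reachAux P t N y)
              = ∑ y, (if y = z then (1:ℝ) else 0) * reachAux P t N y from
            Finset.sum_congr rfl fun y _ => by rw [hz], hind]
        rw [this]; exact ih z
      · cases sp
        · -- start
          have : reachAux P t (N+1) (Sum.inr Sp.start)
              = ∑ j : Fin m, (1/m) * reachAux P t N (Sum.inl (j, 0)) := by
            simp only [reachAux, if_neg hx]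
            exact hstart _
          rw [this]
          constructor
          · exact Finset.sum_nonneg fun j _ => mul_nonneg (by positivity) (ih _).1
          · calc (∑ j : Fin m, (1/m) * reachAux P t N (Sum.inl (j, 0)))
                ≤ ∑ _j : Fin m, (1/(m:ℝ)) * 1 :=
                  Finset.sum_le_sum fun j _ =>
                    mul_le_mul_of_nonneg_left (ih _).2 (by positivity)
              _ = 1 := by
                  rw [Finset.sum_const, Finset.card_univ, Fintype.card_fin, nsmul_eq_mul]
                  field_simp
        · exact absurd rfl hx
        · have : reachAux P t (N+1) (Sum.inr Sp.sink) = reachAux P t N (Sum.inr Sp.sink) := by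
            simp only [reachAux, if_neg hx]
            rw [show (∑ y, P (Sum.inr Sp.sink) y * reachAux P t N y)
                = ∑ y, (if y = Sum.inr Sp.sink then (1:ℝ) else 0) * reachAux P t N y from
              Finset.sum_congr rfl fun y _ => by simp [hP, satTrans], hind]
          rw [this]; exact ih _
  -- sink and bad-clause states never reach target
  have hzero : ∀ N : ℕ, reachAux P t N (Sum.inr Sp.sink) = 0 ∧
      ∀ k : Fin 3, reachAux P t N (Sum.inl (j₀, k)) = 0 := by
    intro N
    induction N with
    | zero => constructor <;> simp [reachAux, ht]
    | succ N ih =>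
      constructor
      · have : reachAux P t (N+1) (Sum.inr Sp.sink) = reachAux P t N (Sum.inr Sp.sink) := by
          simp only [reachAux]
          rw [if_neg (by simp [ht])]
          rw [show (∑ y, P (Sum.inr Sp.sink) y * reachAux P t N y)
              = ∑ y, (if y = Sum.inr Sp.sink then (1:ℝ) else 0) * reachAux P t N y from
            Finset.sum_congr rfl fun y _ => by simp [hP, satTrans], hind]
        rw [this]; exact ih.1
      · intro k
        have heq : reachAux P t (N+1) (Sum.inl (j₀, k)) =
            reachAux P t N (if (k:ℕ) < 2 then Sum.inl (j₀, k + 1) else Sum.inr Sp.sink) := by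
          simp only [reachAux]
          rw [if_neg (by simp [ht])]
          rw [show (∑ y, P (Sum.inl (j₀,k)) y * reachAux P t N y)
              = ∑ y, (if y = (if (k:ℕ) < 2 then Sum.inl (j₀, k + 1) else Sum.inr Sp.sink)
                  then (1:ℝ) else 0) * reachAux P t N y from
            Finset.sum_congr rfl fun y _ => by rw [hrowj0], hind]
        rw [heq]
        by_cases hk : (k:ℕ) < 2
        · rw [if_pos hk]; exact ih.2 _
        · rw [if_neg hk]; exact ih.1
  -- conclude
  have hsum : (∑ j : Fin m, (if j = j₀ then (0:ℝ) else 1/m)) = 1 - 1/m := by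
    have he : ∀ j : Fin m, (if j = j₀ then (0:ℝ) else 1/m)
        = 1/(m:ℝ) - (if j = j₀ then 1/(m:ℝ) else 0) := by
      intro j; split <;> ring
    rw [Finset.sum_congr rfl fun j _ => he j, Finset.sum_sub_distrib,
      Finset.sum_const, Finset.card_univ, Fintype.card_fin, nsmul_eq_mul,
      Finset.sum_ite_eq' Finset.univ j₀ (fun _ => (1:ℝ)/m)]
    simp only [Finset.mem_univ, if_true]
    field_simp
  rw [ReachProb]
  refine ciSup_le fun N => ?_
  have h1m : 1/(m:ℝ) ≤ 1 := by
    rw [div_le_one hm0]; exact_mod_cast hm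
  cases N with
  | zero =>
    simp only [reachAux]
    rw [if_neg (by simp [ht])]
    linarith
  | succ N =>
    have : reachAux P t (N+1) (Sum.inr Sp.start)
        = ∑ j : Fin m, (1/m) * reachAux P t N (Sum.inl (j, 0)) := by
      simp only [reachAux]
      rw [if_neg (by simp [ht])]
      exact hstart _
    rw [this, ← hsum]
    refine Finset.sum_le_sum fun j _ => ?_
    by_cases hj : j = j₀
    · rw [if_pos hj, hj, (hzero N).2 0, mul_zero]
    · rw [if_neg hj]
      calc (1/(m:ℝ)) * reachAux P t N (Sum.inl (j, 0))
          ≤ (1/m) * 1 := mul_le_mul_of_nonneg_left (hbd N _).2 (by positivity)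
        _ = 1/m := mul_one _
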